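/- Let (W,S) be the Coxeter system with S = {s_1, s_2, s_3} and m_{s_1s_2} = 3, m_{s_2s_3} = ∞, m_{s_1s_3} = 2, and let V = ℂu_0 ⊕ ⊕_{i≥1}(ℂu_i ⊕ ℂv_i) be the representation of W given by the Section 5 construction. Then V is an irreducible representation of W of infinite dimension: the only W-invariant linear subspaces of V are 0 and V, and V is not finite dimensional. -/

import Mathlib

/-- The Coxeter matrix with `S = {s₁, s₂, s₃}` (indexed by `Fin 3`), `m_{s₁s₂} = 3`,
`m_{s₂s₃} = ∞` (encoded as `0` in Mathlib) and `m_{s₁s₃} = 2`. -/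
def sec5Matrix : CoxeterMatrix (Fin 3) where
  M := !![1, 3, 2; 3, 1, 0; 2, 0, 1]
  off_diagonal i i' h := by fin_cases i <;> fin_cases i' <;> simp_all

/-- The Section 5 operators on basis vectors.  The basis of
`V = ℂu₀ ⊕ ⊕_{i ≥ 1} (ℂuᵢ ⊕ ℂvᵢ)` is indexed by `ℕ ⊕ ℕ`, with `Sum.inl i ↦ uᵢ` (`i ≥ 0`) and
`Sum.inr j ↦ v_{j+1}` (`j ≥ 0`).  The formulas are: `s₁·uᵢ = uᵢ`, `s₁·vᵢ = −vᵢ`;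
`s₂·u₀ = u₀`, `s₂·uᵢ = (3vᵢ − uᵢ)/2` and `s₂·vᵢ = (uᵢ + vᵢ)/2` for `i ≥ 1`;
`s₃·u_{2k} = u_{2k+1}`, `s₃·u_{2k+1} = u_{2k}`, `s₃·v_{2k−1} = v_{2k}`, `s₃·v_{2k} = v_{2k−1}`
(which on indices `Sum.inl i`, resp. `v_{j+1} = Sum.inr j`, is
`n ↦ n + 1` for `n` even and `n ↦ n − 1` for `n` odd). -/
noncomputable def sec5Basis (s : Fin 3) (x : ℕ ⊕ ℕ) : (ℕ ⊕ ℕ) →₀ ℂ :=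
  if s = 0 then
    match x with
    | Sum.inl i => Finsupp.single (Sum.inl i) 1
    | Sum.inr j => -Finsupp.single (Sum.inr j) 1
  else if s = 1 then
    match x with
    | Sum.inl 0 => Finsupp.single (Sum.inl 0) 1
    | Sum.inl (i + 1) => ((3 : ℂ) / 2) • Finsupp.single (Sum.inr i) 1 -
        ((1 : ℂ) / 2) • Finsupp.single (Sum.inl (i + 1)) 1
    | Sum.inr j => ((1 : ℂ) / 2) • Finsupp.single (Sum.inl (j + 1)) 1 +
        ((1 : ℂ) / 2) • Finsupp.single (Sum.inr j) 1
  else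
    match x with
    | Sum.inl i => Finsupp.single (Sum.inl (if Even i then i + 1 else i - 1)) 1
    | Sum.inr j => Finsupp.single (Sum.inr (if Even j then j + 1 else j - 1)) 1

/-- The Section 5 operators, as linear endomorphisms of `V = (ℕ ⊕ ℕ) →₀ ℂ`. -/
noncomputable def sec5Act (s : Fin 3) : ((ℕ ⊕ ℕ) →₀ ℂ) →ₗ[ℂ] ((ℕ ⊕ ℕ) →₀ ℂ) :=
  Finsupp.lift _ ℂ _ (sec5Basis s)

section Sec5Helpers

lemma act_single (s : Fin 3) (x : ℕ ⊕ ℕ) (c : ℂ) :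
    sec5Act s (Finsupp.single x c) = c • sec5Basis s x := by
  simp [sec5Act]

lemma a0l (i : ℕ) (c : ℂ) :
    sec5Act 0 (Finsupp.single (Sum.inl i) c) = Finsupp.single (Sum.inl i) c := by
  simp [sec5Act, sec5Basis]

lemma a0r (j : ℕ) (c : ℂ) :
    sec5Act 0 (Finsupp.single (Sum.inr j) c) = -Finsupp.single (Sum.inr j) c := by
  simp [sec5Act, sec5Basis]

lemma a1l0 (c : ℂ) :
    sec5Act 1 (Finsupp.single (Sum.inl 0) c) = Finsupp.single (Sum.inl 0) c := by
  simp [sec5Act, sec5Basis]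

lemma a1ls (i : ℕ) (c : ℂ) :
    sec5Act 1 (Finsupp.single (Sum.inl (i + 1)) c) =
      (c * (3 / 2)) • Finsupp.single (Sum.inr i) 1 -
        (c * (1 / 2)) • Finsupp.single (Sum.inl (i + 1)) 1 := by
  simp [sec5Act, sec5Basis, smul_sub, smul_smul]

lemma a1r (j : ℕ) (c : ℂ) :
    sec5Act 1 (Finsupp.single (Sum.inr j) c) =
      (c * (1 / 2)) • Finsupp.single (Sum.inl (j + 1)) 1 +
        (c * (1 / 2)) • Finsupp.single (Sum.inr j) 1 := by
  simp [sec5Act, sec5Basis, smul_add, smul_smul]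

lemma a2l (i : ℕ) (c : ℂ) :
    sec5Act 2 (Finsupp.single (Sum.inl i) c) =
      Finsupp.single (Sum.inl (if Even i then i + 1 else i - 1)) c := by
  simp [sec5Act, sec5Basis]

lemma a2r (j : ℕ) (c : ℂ) :
    sec5Act 2 (Finsupp.single (Sum.inr j) c) =
      Finsupp.single (Sum.inr (if Even j then j + 1 else j - 1)) c := by
  simp [sec5Act, sec5Basis]

/-- projection to the u-part -/
noncomputable def PuS : ((ℕ ⊕ ℕ) →₀ ℂ) →ₗ[ℂ] ((ℕ ⊕ ℕ) →₀ ℂ) :=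
  ((2 : ℂ)⁻¹) • (LinearMap.id + sec5Act 0)
/-- projection to the v-part -/
noncomputable def PvS : ((ℕ ⊕ ℕ) →₀ ℂ) →ₗ[ℂ] ((ℕ ⊕ ℕ) →₀ ℂ) :=
  ((2 : ℂ)⁻¹) • (LinearMap.id - sec5Act 0)

lemma PuS_apply (x : (ℕ ⊕ ℕ) →₀ ℂ) : PuS x = (2 : ℂ)⁻¹ • (x + sec5Act 0 x) := rfl
lemma PvS_apply (x : (ℕ ⊕ ℕ) →₀ ℂ) : PvS x = (2 : ℂ)⁻¹ • (x - sec5Act 0 x) := rfl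

lemma PuS_l (i : ℕ) (c : ℂ) :
    PuS (Finsupp.single (Sum.inl i) c) = Finsupp.single (Sum.inl i) c := by
  rw [PuS_apply, a0l]; module

lemma PuS_r (j : ℕ) (c : ℂ) : PuS (Finsupp.single (Sum.inr j) c) = 0 := by
  rw [PuS_apply, a0r]; module

lemma PvS_l (i : ℕ) (c : ℂ) : PvS (Finsupp.single (Sum.inl i) c) = 0 := by
  rw [PvS_apply, a0l]; module

lemma PvS_r (j : ℕ) (c : ℂ) :
    PvS (Finsupp.single (Sum.inr j) c) = Finsupp.single (Sum.inr j) c := by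
  rw [PvS_apply, a0r]; module

/-- extraction operator -/
noncomputable def ES : ((ℕ ⊕ ℕ) →₀ ℂ) →ₗ[ℂ] ((ℕ ⊕ ℕ) →₀ ℂ) :=
  PuS + (2 : ℂ) • (PuS ∘ₗ sec5Act 1 ∘ₗ PuS)

lemma ES_apply (x : (ℕ ⊕ ℕ) →₀ ℂ) :
    ES x = PuS x + (2 : ℂ) • PuS (sec5Act 1 (PuS x)) := rfl

lemma ES_coeff (x : (ℕ ⊕ ℕ) →₀ ℂ) :
    ES x = (3 * x (Sum.inl 0)) • Finsupp.single (Sum.inl 0) 1 := by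
  induction x using Finsupp.induction_linear with
  | zero => simp
  | add f g hf hg =>
      rw [map_add, hf, hg, Finsupp.add_apply]
      module
  | single a b =>
      rcases a with i | j
      · rcases i with _ | i
        · rw [ES_apply, PuS_l, a1l0, PuS_l]
          ext p
          simp [Finsupp.single_apply]
          split_ifs <;> ring
        · rw [ES_apply, PuS_l, a1ls, map_sub, map_smul, map_smul, PuS_l, PuS_r]
          ext p
          simp [Finsupp.single_apply]
          split_ifs <;> first | rfl | ring
      · rw [ES_apply, PuS_r, map_zero, map_zero]
        simp [Finsupp.single_apply]

lemma S_odd (x : (ℕ ⊕ ℕ) →₀ ℂ) (i : ℕ) (h : Even i) :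
    (sec5Act 2 x) (Sum.inl i) = x (Sum.inl (i + 1)) := by
  induction x using Finsupp.induction_linear with
  | zero => simp
  | add f g hf hg => rw [map_add, Finsupp.add_apply, Finsupp.add_apply, hf, hg]
  | single a b =>
      obtain ⟨k, rfl⟩ := h
      rcases a with i' | j'
      · rw [a2l]
        simp only [Finsupp.single_apply, Sum.inl.injEq]
        rcases Nat.even_or_odd i' with h' | h'
        · rw [if_pos h']
          obtain ⟨m, rfl⟩ := h'
          split_ifs <;> first | rfl | omega
        · rw [if_neg (Nat.not_even_iff_odd.mpr h')]
          obtain ⟨m, rfl⟩ := h'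
          split_ifs <;> first | rfl | omega
      · rw [a2r]; simp

/-- index-shifting operator -/
noncomputable def GS : ((ℕ ⊕ ℕ) →₀ ℂ) →ₗ[ℂ] ((ℕ ⊕ ℕ) →₀ ℂ) :=
  PuS ∘ₗ sec5Act 1 ∘ₗ sec5Act 2 ∘ₗ PvS ∘ₗ sec5Act 1 ∘ₗ PuS

lemma GS_apply (x : (ℕ ⊕ ℕ) →₀ ℂ) :
    GS x = PuS (sec5Act 1 (sec5Act 2 (PvS (sec5Act 1 (PuS x))))) := rfl

lemma GS_coeff (x : (ℕ ⊕ ℕ) →₀ ℂ) (k : ℕ) (h : Even k) :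
    (GS x) (Sum.inl (k + 1)) = (3 / 4) * x (Sum.inl (k + 2)) := by
  induction x using Finsupp.induction_linear with
  | zero => simp
  | add f g hf hg => rw [map_add, Finsupp.add_apply, Finsupp.add_apply, hf, hg]; ring
  | single a b =>
      obtain ⟨m, rfl⟩ := h
      rcases a with i | j
      · rcases i with _ | i
        · rw [GS_apply, PuS_l, a1l0, PvS_l, map_zero, map_zero, map_zero]
          simp [Finsupp.single_apply]
        · rw [GS_apply, PuS_l, a1ls, map_sub, map_smul, map_smul, PvS_r, PvS_l, smul_zero,
            sub_zero, map_smul, a2r, map_smul, a1r]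
          simp only [smul_add, map_add, map_smul, PuS_l, PuS_r, smul_zero, add_zero]
          simp only [Finsupp.smul_single, Finsupp.single_apply, Sum.inl.injEq, smul_eq_mul]
          rcases Nat.even_or_odd i with h' | h'
          · rw [if_pos h']
            obtain ⟨n, rfl⟩ := h'
            split_ifs <;> first | ring1 | (exfalso; omega)
          · rw [if_neg (Nat.not_even_iff_odd.mpr h')]
            obtain ⟨n, rfl⟩ := h'
            split_ifs <;> first | ring1 | (exfalso; omega)
      · rw [GS_apply, PuS_r, map_zero, map_zero, map_zero, map_zero, map_zero]
        simp [Finsupp.single_apply]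

/-- operator moving v-coefficients to u-coefficients -/
noncomputable def HS : ((ℕ ⊕ ℕ) →₀ ℂ) →ₗ[ℂ] ((ℕ ⊕ ℕ) →₀ ℂ) :=
  PuS ∘ₗ sec5Act 1 ∘ₗ PvS

lemma HS_apply (x : (ℕ ⊕ ℕ) →₀ ℂ) : HS x = PuS (sec5Act 1 (PvS x)) := rfl

lemma HS_coeff (x : (ℕ ⊕ ℕ) →₀ ℂ) (j : ℕ) :
    (HS x) (Sum.inl (j + 1)) = (1 / 2) * x (Sum.inr j) := by
  induction x using Finsupp.induction_linear with
  | zero => simp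
  | add f g hf hg => rw [map_add, Finsupp.add_apply, Finsupp.add_apply, hf, hg]; ring
  | single a b =>
      rcases a with i | j'
      · rw [HS_apply, PvS_l, map_zero, map_zero]
        simp [Finsupp.single_apply]
      · rw [HS_apply, PvS_r, a1r, map_add, map_smul, map_smul, PuS_l, PuS_r, smul_zero, add_zero]
        simp only [Finsupp.smul_single, Finsupp.single_apply, Sum.inl.injEq, smul_eq_mul,
          Sum.inr.injEq, add_left_inj]
        split_ifs <;> ring

lemma g_uodd (k : ℕ) :
    sec5Act 2 (Finsupp.single (Sum.inl (2 * k)) (1 : ℂ)) =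
      Finsupp.single (Sum.inl (2 * k + 1)) 1 := by
  rw [a2l, if_pos ⟨k, by ring⟩]

lemma g_vodd (k : ℕ) :
    sec5Act 2 (Finsupp.single (Sum.inr (2 * k)) (1 : ℂ)) =
      Finsupp.single (Sum.inr (2 * k + 1)) 1 := by
  rw [a2r, if_pos ⟨k, by ring⟩]

lemma g_uv (i : ℕ) :
    Finsupp.single (Sum.inr i) (1 : ℂ) =
      (2 / 3 : ℂ) • (sec5Act 1 (Finsupp.single (Sum.inl (i + 1)) 1) +
        (2 : ℂ)⁻¹ • Finsupp.single (Sum.inl (i + 1)) 1) := by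
  rw [a1ls]
  ext p
  simp [Finsupp.single_apply]
  try split_ifs <;> ring

lemma g_vu (j : ℕ) :
    Finsupp.single (Sum.inl (j + 1)) (1 : ℂ) =
      (2 : ℂ) • sec5Act 1 (Finsupp.single (Sum.inr j) 1) - Finsupp.single (Sum.inr j) 1 := by
  rw [a1r]
  ext p
  simp [Finsupp.single_apply]
  try split_ifs <;> ring

end Sec5Helpers

/-- the Section 5 representation `V = ℂu₀ ⊕ ⊕_{i ≥ 1}(ℂuᵢ ⊕ ℂvᵢ)` of the Coxeter
group `W` of the system with `m_{s₁s₂} = 3`, `m_{s₂s₃} = ∞`, `m_{s₁s₃} = 2` is irreducible and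
of infinite dimension: its only `W`-invariant subspaces are `0` and `V`, and `V` is not finite
dimensional. -/
theorem statement11 {W : Type*} [Group W] (cs : CoxeterSystem sec5Matrix W)
    (ρ : Representation ℂ W ((ℕ ⊕ ℕ) →₀ ℂ))
    (hρ : ∀ s : Fin 3, ρ (cs.simple s) = sec5Act s) :
    (¬ Module.Finite ℂ ((ℕ ⊕ ℕ) →₀ ℂ)) ∧
    ∀ U : Submodule ℂ ((ℕ ⊕ ℕ) →₀ ℂ), (∀ w : W, ∀ v ∈ U, ρ w v ∈ U) → U = ⊥ ∨ U = ⊤ := by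
  constructor
  · intro h
    haveI : Finite (ℕ ⊕ ℕ) := Module.Finite.finite_basis (Finsupp.basisSingleOne (R := ℂ))
    exact not_finite (ℕ ⊕ ℕ)
  intro U hU
  by_cases hbot : U = ⊥
  · exact Or.inl hbot
  right
  have hA : ∀ s : Fin 3, ∀ x ∈ U, sec5Act s x ∈ U := fun s x hx => by
    have := hU (cs.simple s) x hx
    rwa [hρ s] at this
  have hPu : ∀ x ∈ U, PuS x ∈ U := fun x hx => by
    rw [PuS_apply]; exact U.smul_mem _ (U.add_mem hx (hA 0 x hx))
  have hPv : ∀ x ∈ U, PvS x ∈ U := fun x hx => by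
    rw [PvS_apply]; exact U.smul_mem _ (U.sub_mem hx (hA 0 x hx))
  have hES : ∀ x ∈ U, ES x ∈ U := fun x hx => by
    rw [ES_apply]
    exact U.add_mem (hPu x hx) (U.smul_mem _ (hPu _ (hA 1 _ (hPu x hx))))
  have hGS : ∀ x ∈ U, GS x ∈ U := fun x hx => by
    rw [GS_apply]
    exact hPu _ (hA 1 _ (hA 2 _ (hPv _ (hA 1 _ (hPu x hx)))))
  have hHS : ∀ x ∈ U, HS x ∈ U := fun x hx => by
    rw [HS_apply]
    exact hPu _ (hA 1 _ (hPv x hx))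
  -- extraction of u₀ from any element with a nonzero u-coefficient
  have key : ∀ i : ℕ, ∀ x ∈ U, x (Sum.inl i) ≠ 0 →
      Finsupp.single (Sum.inl 0) (1 : ℂ) ∈ U := by
    intro i
    induction i with
    | zero =>
      intro x hx h0
      have h3 : (3 : ℂ) * x (Sum.inl 0) ≠ 0 := mul_ne_zero (by norm_num) h0
      have := U.smul_mem ((3 * x (Sum.inl 0))⁻¹) (hES x hx)
      rwa [ES_coeff, smul_smul, inv_mul_cancel₀ h3, one_smul] at this
    | succ i ih =>
      intro x hx h0
      rcases Nat.even_or_odd i with he | ho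
      · exact ih (sec5Act 2 x) (hA 2 x hx) (by rw [S_odd x i he]; exact h0)
      · obtain ⟨m, rfl⟩ := ho
        refine ih (GS x) (hGS x hx) ?_
        rw [GS_coeff x (2 * m) ⟨m, by ring⟩]
        refine mul_ne_zero (by norm_num) ?_
        have : 2 * m + 2 = 2 * m + 1 + 1 := by ring
        rw [this]
        exact h0
  have hu0 : Finsupp.single (Sum.inl 0) (1 : ℂ) ∈ U := by
    obtain ⟨x, hxU, hx0⟩ : ∃ x ∈ U, x ≠ 0 := by
      by_contra h
      push_neg at h
      exact hbot ((Submodule.eq_bot_iff U).mpr h)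
    obtain ⟨p, hp⟩ : ∃ p, x p ≠ 0 := by
      by_contra h
      push_neg at h
      exact hx0 (Finsupp.ext h)
    rcases p with i | j
    · exact key i x hxU hp
    · refine key (j + 1) (HS x) (hHS x hxU) ?_
      rw [HS_coeff]
      exact mul_ne_zero (by norm_num) hp
  -- generation of all basis vectors
  have huv : ∀ i, Finsupp.single (Sum.inl (i + 1)) (1 : ℂ) ∈ U →
      Finsupp.single (Sum.inr i) (1 : ℂ) ∈ U := fun i h => by
    rw [g_uv i]
    exact U.smul_mem _ (U.add_mem (hA 1 _ h) (U.smul_mem _ h))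
  have hvu : ∀ j, Finsupp.single (Sum.inr j) (1 : ℂ) ∈ U →
      Finsupp.single (Sum.inl (j + 1)) (1 : ℂ) ∈ U := fun j h => by
    rw [g_vu j]
    exact U.sub_mem (U.smul_mem _ (hA 1 _ h)) h
  have hueven : ∀ k, Finsupp.single (Sum.inl (2 * k)) (1 : ℂ) ∈ U →
      Finsupp.single (Sum.inl (2 * k + 1)) (1 : ℂ) ∈ U := fun k h => by
    have := hA 2 _ h
    rwa [g_uodd] at this
  have hveven : ∀ k, Finsupp.single (Sum.inr (2 * k)) (1 : ℂ) ∈ U →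
      Finsupp.single (Sum.inr (2 * k + 1)) (1 : ℂ) ∈ U := fun k h => by
    have := hA 2 _ h
    rwa [g_vodd] at this
  have hu2 : ∀ k, Finsupp.single (Sum.inl (2 * k)) (1 : ℂ) ∈ U := by
    intro k
    induction k with
    | zero => simpa using hu0
    | succ k ih =>
      have h1 := hueven k ih
      have h2 := huv (2 * k) h1
      have h3 := hveven k h2
      have h4 := hvu (2 * k + 1) h3
      have he : 2 * (k + 1) = 2 * k + 1 + 1 := by ring
      rw [he]
      exact h4
  have huAll : ∀ n, Finsupp.single (Sum.inl n) (1 : ℂ) ∈ U := by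
    intro n
    rcases Nat.even_or_odd n with ⟨m, rfl⟩ | ⟨m, rfl⟩
    · have := hu2 m
      rwa [show 2 * m = m + m by ring] at this
    · exact hueven m (hu2 m)
  have hv2 : ∀ m, Finsupp.single (Sum.inr (2 * m)) (1 : ℂ) ∈ U := fun m =>
    huv (2 * m) (huAll (2 * m + 1))
  have hvAll : ∀ j, Finsupp.single (Sum.inr j) (1 : ℂ) ∈ U := by
    intro j
    rcases Nat.even_or_odd j with ⟨m, rfl⟩ | ⟨m, rfl⟩
    · have := hv2 m
      rwa [show 2 * m = m + m by ring] at this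
    · exact hveven m (hv2 m)
  rw [eq_top_iff]
  rintro x -
  induction x using Finsupp.induction_linear with
  | zero => exact U.zero_mem
  | add f g hf hg => exact U.add_mem hf hg
  | single a b =>
    rw [← Finsupp.smul_single_one]
    refine U.smul_mem b ?_
    rcases a with i | j
    · exact huAll i
    · exact hvAll j
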